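/- Let k be an algebraically closed field of characteristic 2 and let L be a Lie algebra over k of dimension at most 3. If there exists a nonzero element e ∈ L such that e lies in the range of (ad e)², then L has dimension exactly 3 and there is a basis {e', h', f'} of L with e' = e, ⁅h',e'⁆ = e', ⁅h',f'⁆ = f' and ⁅e',f'⁆ = h'; in particular L is isomorphic to the 3-dimensional simple Lie algebra 𝔰. -/

import Mathlib

/-- Over an algebraically closed field of characteristic 2, if a Lie algebra
of dimension at most 3 contains a nonzero element `e` lying in the range of `(ad e)²`,
then it is 3-dimensional with a basis `{e, h', f'}` (with `e = B 0`, `h' = B 1`, `f' = B 2`)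
satisfying the bracket relations of the 3-dimensional simple Lie algebra `𝔰`. -/
theorem stmt_1 (k : Type*) [Field k] [IsAlgClosed k] [CharP k 2]
    (L : Type*) [LieRing L] [LieAlgebra k L] [Module.Finite k L]
    (hdim : Module.finrank k L ≤ 3)
    (e : L) (he : e ≠ 0)
    (hmem : e ∈ LinearMap.range ((LieAlgebra.ad k L e) ^ 2)) :
    Module.finrank k L = 3 ∧
      ∃ B : Module.Basis (Fin 3) k L, B 0 = e ∧
        ⁅B 1, B 0⁆ = B 0 ∧ ⁅B 1, B 2⁆ = B 2 ∧ ⁅B 0, B 2⁆ = B 1 := by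
  -- characteristic two facts in L
  have hchar : ∀ x : L, x + x = 0 := by
    intro x
    have : (2 : k) = 0 := by exact_mod_cast CharP.cast_eq_zero k 2
    calc x + x = (2 : k) • x := (two_smul k x).symm
    _ = 0 := by rw [this, zero_smul]
  have hneg : ∀ x : L, -x = x := fun x => neg_eq_of_add_eq_zero_left (hchar x)
  obtain ⟨f, hf⟩ := hmem
  have hf' : ⁅e, ⁅e, f⁆⁆ = e := by
    simpa [pow_two, Module.End.mul_apply, LieAlgebra.ad_apply] using hf
  set h : L := ⁅e, f⁆ with hh
  have heh : ⁅e, h⁆ = e := hf'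
  have hhe : ⁅h, e⁆ = e := by rw [← lie_skew, heh, hneg]
  -- linear independence of e, h, f
  have hli : LinearIndependent k ![e, h, f] := by
    rw [Fintype.linearIndependent_iff]
    intro g hg
    rw [Fin.sum_univ_three] at hg
    simp only [Matrix.cons_val_zero, Matrix.cons_val_one, Matrix.head_cons,
      Matrix.cons_val_two, Matrix.tail_cons] at hg
    have h1 : g 1 • e + g 2 • h = 0 := by
      have := congrArg (fun x => ⁅e, x⁆) hg
      simpa [heh, ← hh] using this
    have h2 : g 2 • e = 0 := by
      have := congrArg (fun x => ⁅e, x⁆) h1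
      simpa [heh] using this
    have hg2 : g 2 = 0 := by
      rcases smul_eq_zero.mp h2 with h | h
      · exact h
      · exact absurd h he
    have hg1 : g 1 = 0 := by
      rw [hg2, zero_smul, add_zero] at h1
      rcases smul_eq_zero.mp h1 with h | h
      · exact h
      · exact absurd h he
    have hg0 : g 0 = 0 := by
      rw [hg1, hg2, zero_smul, zero_smul, add_zero, add_zero] at hg
      rcases smul_eq_zero.mp hg with h | h
      · exact h
      · exact absurd h he
    intro i; fin_cases i <;> assumption
  have hfr : Module.finrank k L = 3 :=
    le_antisymm hdim (by simpa using hli.fintype_card_le_finrank)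
  -- coordinates of ⁅h, f⁆
  have hcard : Fintype.card (Fin 3) = Module.finrank k L := by simp [hfr]
  let B0 : Module.Basis (Fin 3) k L := basisOfLinearIndependentOfCardEqFinrank hli hcard
  have hB0 : ⇑B0 = ![e, h, f] := coe_basisOfLinearIndependentOfCardEqFinrank hli hcard
  set α : k := B0.repr ⁅h, f⁆ 0 with hα
  set β : k := B0.repr ⁅h, f⁆ 1 with hβ
  set γ : k := B0.repr ⁅h, f⁆ 2 with hγ
  have hhf : ⁅h, f⁆ = α • e + β • h + γ • f := by
    have := B0.sum_repr ⁅h, f⁆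
    rw [Fin.sum_univ_three] at this
    rw [← this, hB0]
    simp [add_assoc]
    rfl
  -- Jacobi: ⁅e, ⁅h, f⁆⁆ = h
  have hjac : ⁅e, ⁅h, f⁆⁆ = h := by
    rw [leibniz_lie, heh, lie_self, add_zero, ← hh]
  have hbg : β • e + γ • h = h := by
    rw [hhf] at hjac
    simpa [heh, ← hh] using hjac
  have key : β • e + (γ - 1) • h + (0:k) • f = 0 := by
    have h' : β • e + (γ - 1) • h = (β • e + γ • h) - h := by
      rw [sub_smul, one_smul]; abel
    rw [zero_smul, add_zero, h', hbg, sub_self]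
  have hcoef := Fintype.linearIndependent_iff.mp hli ![β, γ - 1, 0] (by
    rw [Fin.sum_univ_three]
    simpa using key)
  have hβ0 : β = 0 := by simpa using hcoef 0
  have hγ1 : γ = 1 := by have := hcoef 1; simp only [Matrix.cons_val_one, Matrix.head_cons] at this; exact sub_eq_zero.mp this
  -- square root of α
  obtain ⟨a, ha⟩ := IsAlgClosed.exists_pow_nat_eq α (n := 2) two_pos
  -- new basis
  have hli2 : LinearIndependent k ![e, h + a • e, a • h + f] := by
    rw [Fintype.linearIndependent_iff]
    intro g hg
    rw [Fin.sum_univ_three] at hg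
    simp only [Matrix.cons_val_zero, Matrix.cons_val_one, Matrix.head_cons,
      Matrix.cons_val_two, Matrix.tail_cons] at hg
    have hg' : (g 0 + g 1 * a) • e + (g 1 + g 2 * a) • h + g 2 • f = 0 := by
      rw [← hg]
      simp only [smul_add, smul_smul, add_smul]
      abel
    have hcoef2 := Fintype.linearIndependent_iff.mp hli ![g 0 + g 1 * a, g 1 + g 2 * a, g 2] (by
      rw [Fin.sum_univ_three]; simpa using hg')
    have h2 : g 2 = 0 := by simpa using hcoef2 2
    have h1 : g 1 = 0 := by have := hcoef2 1; simp [h2] at this; simpa using this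
    have h0 : g 0 = 0 := by have := hcoef2 0; simp [h1] at this; simpa using this
    intro i; fin_cases i <;> assumption
  let B : Module.Basis (Fin 3) k L := basisOfLinearIndependentOfCardEqFinrank hli2 hcard
  have hB : ⇑B = ![e, h + a • e, a • h + f] :=
    coe_basisOfLinearIndependentOfCardEqFinrank hli2 hcard
  refine ⟨hfr, B, ?_, ?_, ?_, ?_⟩
  · rw [hB]; rfl
  · rw [hB]
    show ⁅h + a • e, e⁆ = e
    simp [hhe]
  · rw [hB]
    show ⁅h + a • e, a • h + f⁆ = a • h + f
    have ha2 : a • (a • e) = α • e := by rw [smul_smul, ← pow_two, ha]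
    simp only [lie_add, add_lie, lie_smul, smul_lie, lie_self, smul_zero,
      zero_add, add_zero, heh, smul_smul]
    rw [show a * a = α from by rw [← pow_two, ha], ← hh, hhf, hβ0, hγ1,
      zero_smul, one_smul, add_zero]
    rw [show α • e + (α • e + f + a • h) = (α • e + α • e) + (a • h + f) from by abel,
      hchar, zero_add]
  · rw [hB]
    show ⁅e, a • h + f⁆ = h + a • e
    rw [lie_add, lie_smul, heh, ← hh, add_comm]
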